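/- Let F ∈ ℝ^{n×n}, σ > 0, δ > 0 with |F|·(exp(σδ) − 1)/σ < 1 (in operator norm). Suppose x, ξ : [−δ, ∞) → ℝⁿ are continuous, and for all t ≥ 0: ξ(t) − x(t) = ∫_{t−δ}^{t} F(ξ(s) − x(s)) ds + w(t) + A·exp(−μt)·c, where w : [0,∞) → ℝⁿ is continuous, μ ≥ σ, A ∈ ℝ, c ∈ ℝⁿ. Then for all t ≥ 0: sup_{0 ≤ s ≤ t}(exp(σs)|ξ(s) − x(s)|) ≤ (σ/(σ − |F|(exp(σδ)−1)))·(sup_{0 ≤ s ≤ t}(exp(σs)|w(s)|) + |A||c| + sup_{−δ ≤ s ≤ 0}(exp(σs)|ξ(s) − x(s)|)). -/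

import Mathlib

open Real Set

noncomputable def supOn (f : ℝ → ℝ) (a b : ℝ) : ℝ := sSup (f '' Set.Icc a b)

lemma supOn_le {f : ℝ → ℝ} {a b C : ℝ} (hab : a ≤ b) (h : ∀ s ∈ Set.Icc a b, f s ≤ C) :
    supOn f a b ≤ C :=
  csSup_le ((Set.nonempty_Icc.mpr hab).image f) (by rintro _ ⟨s, hs, rfl⟩; exact h s hs)

lemma le_supOn {f : ℝ → ℝ} {a b : ℝ} (hf : ContinuousOn f (Set.Icc a b)) {s : ℝ}
    (hs : s ∈ Set.Icc a b) : f s ≤ supOn f a b :=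
  le_csSup (isCompact_Icc.bddAbove_image hf) ⟨s, hs, rfl⟩

lemma exp_int (σ a b : ℝ) (hσ : 0 < σ) :
    ∫ u in a..b, Real.exp (-(σ * u)) =
      (Real.exp (-(σ * a)) - Real.exp (-(σ * b))) / σ := by
  have hderiv : ∀ u ∈ Set.uIcc a b,
      HasDerivAt (fun v => -Real.exp (-(σ * v)) / σ) (Real.exp (-(σ * u))) u := by
    intro u _
    have h1 : HasDerivAt (fun v => -(σ * v)) (-σ) u := by
      simpa using ((hasDerivAt_id u).const_mul (-σ))
    have h2 := h1.exp
    have h3 := (h2.neg).div_const σ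
    refine h3.congr_deriv ?_
    rw [neg_mul_eq_mul_neg, neg_neg, mul_div_assoc, div_self hσ.ne', mul_one]
  have hint : IntervalIntegrable (fun u => Real.exp (-(σ * u))) MeasureTheory.volume a b :=
    (Real.continuous_exp.comp (by continuity)).intervalIntegrable a b
  rw [intervalIntegral.integral_eq_sub_of_hasDerivAt hderiv hint]
  ring

set_option maxHeartbeats 2000000 in
theorem stmt15 (n : ℕ) (σ δ μ A : ℝ) (hσ : 0 < σ) (hδ : 0 < δ) (hμ : σ ≤ μ)
    (F : EuclideanSpace ℝ (Fin n) →L[ℝ] EuclideanSpace ℝ (Fin n))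
    (hsg : ‖F‖ * (Real.exp (σ * δ) - 1) / σ < 1)
    (x ξ w : ℝ → EuclideanSpace ℝ (Fin n)) (c : EuclideanSpace ℝ (Fin n))
    (hx : ContinuousOn x (Set.Ici (-δ))) (hξ : ContinuousOn ξ (Set.Ici (-δ)))
    (hw : ContinuousOn w (Set.Ici 0))
    (heq : ∀ t ≥ (0:ℝ), ξ t - x t = (∫ s in (t - δ)..t, F (ξ s - x s))
      + w t + (A * Real.exp (-μ * t)) • c) :
    ∀ t ≥ (0:ℝ),
      supOn (fun s => Real.exp (σ * s) * ‖ξ s - x s‖) 0 t ≤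
        (σ / (σ - ‖F‖ * (Real.exp (σ * δ) - 1))) *
          (supOn (fun s => Real.exp (σ * s) * ‖w s‖) 0 t + |A| * ‖c‖
            + supOn (fun s => Real.exp (σ * s) * ‖ξ s - x s‖) (-δ) 0) := by
  intro t ht
  set e : ℝ → EuclideanSpace ℝ (Fin n) := fun s => ξ s - x s with he_def
  have he : ContinuousOn e (Set.Ici (-δ)) := hξ.sub hx
  set g : ℝ → ℝ := fun s => Real.exp (σ * s) * ‖e s‖ with hg_def
  have hgcont : ContinuousOn g (Set.Ici (-δ)) :=
    ((Real.continuous_exp.comp (continuous_const.mul continuous_id)).continuousOn).mul he.norm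
  have hδ0 : -δ ≤ 0 := by linarith
  have hsub0 : Set.Icc (-δ) (0:ℝ) ⊆ Set.Ici (-δ) := Set.Icc_subset_Ici_self
  have hsubt : Set.Icc (0:ℝ) t ⊆ Set.Ici (-δ) := fun u hu => le_trans hδ0 hu.1
  set M₀ : ℝ := supOn g (-δ) 0 with hM₀_def
  set M : ℝ := supOn g 0 t with hM_def
  set W : ℝ := supOn (fun s => Real.exp (σ * s) * ‖w s‖) 0 t with hW_def
  have hgnn : ∀ u, 0 ≤ g u := fun u => mul_nonneg (Real.exp_pos _).le (norm_nonneg _)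
  have hM₀nn : 0 ≤ M₀ :=
    le_trans (hgnn 0) (le_supOn (hgcont.mono hsub0) ⟨hδ0, le_refl 0⟩)
  have hMnn : 0 ≤ M :=
    le_trans (hgnn 0) (le_supOn (hgcont.mono hsubt) ⟨le_refl 0, ht⟩)
  have hwcont : ContinuousOn (fun s => Real.exp (σ * s) * ‖w s‖) (Set.Icc (0:ℝ) t) :=
    (((Real.continuous_exp.comp (continuous_const.mul continuous_id)).continuousOn).mul
      (hw.mono Set.Icc_subset_Ici_self).norm)
  have hWnn : 0 ≤ W :=
    le_trans (by positivity : (0:ℝ) ≤ Real.exp (σ * 0) * ‖w 0‖)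
      (le_supOn (f := fun s => Real.exp (σ * s) * ‖w s‖) hwcont ⟨le_refl 0, ht⟩)
  set k : ℝ := ‖F‖ * (Real.exp (σ * δ) - 1) / σ with hk_def
  have hexp1 : 1 ≤ Real.exp (σ * δ) := Real.one_le_exp (by positivity)
  have hknn : 0 ≤ k := by
    apply div_nonneg _ hσ.le
    exact mul_nonneg (norm_nonneg _) (by linarith)
  have hk1 : k < 1 := hsg
  -- bound on ‖e u‖ for u ∈ [-δ, t]
  have hebound : ∀ u ∈ Set.Icc (-δ) t, ‖e u‖ ≤ Real.exp (-(σ * u)) * (M₀ + M) := by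
    intro u hu
    have hgu : g u ≤ M₀ + M := by
      rcases le_or_gt u 0 with h0 | h0
      · exact le_trans (le_supOn (hgcont.mono hsub0) ⟨hu.1, h0⟩) (by linarith)
      · exact le_trans (le_supOn (hgcont.mono hsubt) ⟨h0.le, hu.2⟩) (by linarith)
    have : ‖e u‖ = Real.exp (-(σ * u)) * g u := by
      simp only [hg_def]
      rw [← mul_assoc, ← Real.exp_add]
      simp
    rw [this]
    exact mul_le_mul_of_nonneg_left hgu (Real.exp_pos _).le
  -- pointwise bound on g s for s ∈ [0, t]
  have pb : ∀ s ∈ Set.Icc (0:ℝ) t, g s ≤ k * (M₀ + M) + (W + |A| * ‖c‖) := by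
    intro s hs
    obtain ⟨hs0, hst⟩ := hs
    have hsδ : s - δ ≤ s := by linarith
    have hIccsub : Set.Icc (s - δ) s ⊆ Set.Icc (-δ) t :=
      Set.Icc_subset_Icc (by linarith) hst
    have hIccsub' : Set.Icc (s - δ) s ⊆ Set.Ici (-δ) := fun u hu => by
      have := (hIccsub hu).1; exact this
    have heqs : e s = (∫ u in (s - δ)..s, F (e u)) + w s + (A * Real.exp (-μ * s)) • c := by
      simp only [he_def]; exact heq s hs0
    -- norm of the integral term
    have hcontFe : ContinuousOn (fun u => F (e u)) (Set.Icc (s - δ) s) :=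
      F.continuous.comp_continuousOn (he.mono hIccsub')
    have hbound_int : IntervalIntegrable
        (fun u => ‖F‖ * (Real.exp (-(σ * u)) * (M₀ + M))) MeasureTheory.volume (s - δ) s := by
      exact (continuous_const.mul ((Real.continuous_exp.comp
        ((continuous_const.mul continuous_id).neg)).mul continuous_const)).intervalIntegrable _ _
    have hnormle : ‖∫ u in (s - δ)..s, F (e u)‖ ≤
        |∫ u in (s - δ)..s, ‖F‖ * (Real.exp (-(σ * u)) * (M₀ + M))| := by
      apply intervalIntegral.norm_integral_le_abs_of_norm_le _ hbound_int
      apply MeasureTheory.ae_restrict_of_forall_mem measurableSet_uIoc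
      intro u hu
      have hu' : u ∈ Set.Icc (s - δ) s := by
        rw [Set.uIoc_of_le hsδ] at hu
        exact ⟨hu.1.le, hu.2⟩
      calc ‖F (e u)‖ ≤ ‖F‖ * ‖e u‖ := F.le_opNorm _
        _ ≤ ‖F‖ * (Real.exp (-(σ * u)) * (M₀ + M)) :=
            mul_le_mul_of_nonneg_left (hebound u (hIccsub hu')) (norm_nonneg _)
    have hIval : ∫ u in (s - δ)..s, ‖F‖ * (Real.exp (-(σ * u)) * (M₀ + M)) =
        ‖F‖ * (M₀ + M) * ((Real.exp (-(σ * (s - δ))) - Real.exp (-(σ * s))) / σ) := by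
      rw [show (fun u => ‖F‖ * (Real.exp (-(σ * u)) * (M₀ + M))) =
          (fun u => (‖F‖ * (M₀ + M)) * Real.exp (-(σ * u))) from funext fun u => by ring,
        intervalIntegral.integral_const_mul, exp_int σ _ _ hσ]
    have hexp_mono : Real.exp (-(σ * s)) ≤ Real.exp (-(σ * (s - δ))) := by
      apply Real.exp_le_exp.mpr
      nlinarith
    have habs : |∫ u in (s - δ)..s, ‖F‖ * (Real.exp (-(σ * u)) * (M₀ + M))| =
        ‖F‖ * (M₀ + M) * ((Real.exp (-(σ * (s - δ))) - Real.exp (-(σ * s))) / σ) := by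
      rw [hIval, abs_of_nonneg]
      apply mul_nonneg (mul_nonneg (norm_nonneg _) (by linarith))
      apply div_nonneg (by linarith) hσ.le
    -- now estimate g s
    have hnorm_es : ‖e s‖ ≤ ‖F‖ * (M₀ + M) * ((Real.exp (-(σ * (s - δ))) - Real.exp (-(σ * s))) / σ)
        + ‖w s‖ + |A| * Real.exp (-μ * s) * ‖c‖ := by
      rw [heqs]
      refine le_trans (norm_add_le _ _) ?_
      gcongr
      · refine le_trans (norm_add_le _ _) ?_
        gcongr
        exact le_trans hnormle (le_of_eq habs)
      · rw [norm_smul, Real.norm_eq_abs, abs_mul, abs_of_nonneg (Real.exp_pos _).le]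
    have key : g s ≤ Real.exp (σ * s) *
        (‖F‖ * (M₀ + M) * ((Real.exp (-(σ * (s - δ))) - Real.exp (-(σ * s))) / σ)
          + ‖w s‖ + |A| * Real.exp (-μ * s) * ‖c‖) :=
      mul_le_mul_of_nonneg_left hnorm_es (Real.exp_pos _).le
    have e1 : Real.exp (σ * s) *
        (‖F‖ * (M₀ + M) * ((Real.exp (-(σ * (s - δ))) - Real.exp (-(σ * s))) / σ)) =
        k * (M₀ + M) := by
      rw [hk_def]
      have h2 : Real.exp (σ * s) * (Real.exp (-(σ * (s - δ))) - Real.exp (-(σ * s))) =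
          Real.exp (σ * δ) - 1 := by
        rw [mul_sub, ← Real.exp_add, ← Real.exp_add]
        rw [show σ * s + -(σ * (s - δ)) = σ * δ by ring,
          show σ * s + -(σ * s) = 0 by ring, Real.exp_zero]
      rw [show Real.exp (σ * s) *
          (‖F‖ * (M₀ + M) * ((Real.exp (-(σ * (s - δ))) - Real.exp (-(σ * s))) / σ)) =
          ‖F‖ * (M₀ + M) *
            ((Real.exp (σ * s) * (Real.exp (-(σ * (s - δ))) - Real.exp (-(σ * s)))) / σ) by ring,
        h2]
      ring
    have e2 : Real.exp (σ * s) * ‖w s‖ ≤ W :=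
      le_supOn (f := fun s => Real.exp (σ * s) * ‖w s‖) hwcont ⟨hs0, hst⟩
    have e3 : Real.exp (σ * s) * (|A| * Real.exp (-μ * s) * ‖c‖) ≤ |A| * ‖c‖ := by
      have : Real.exp (σ * s) * Real.exp (-μ * s) ≤ 1 := by
        rw [← Real.exp_add]
        apply Real.exp_le_one_iff.mpr
        nlinarith
      calc Real.exp (σ * s) * (|A| * Real.exp (-μ * s) * ‖c‖)
          = (Real.exp (σ * s) * Real.exp (-μ * s)) * (|A| * ‖c‖) := by ring
        _ ≤ 1 * (|A| * ‖c‖) :=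
            mul_le_mul_of_nonneg_right this (mul_nonneg (abs_nonneg _) (norm_nonneg _))
        _ = |A| * ‖c‖ := one_mul _
    calc g s ≤ Real.exp (σ * s) *
          (‖F‖ * (M₀ + M) * ((Real.exp (-(σ * (s - δ))) - Real.exp (-(σ * s))) / σ)
            + ‖w s‖ + |A| * Real.exp (-μ * s) * ‖c‖) := key
      _ = Real.exp (σ * s) *
            (‖F‖ * (M₀ + M) * ((Real.exp (-(σ * (s - δ))) - Real.exp (-(σ * s))) / σ))
          + Real.exp (σ * s) * ‖w s‖
          + Real.exp (σ * s) * (|A| * Real.exp (-μ * s) * ‖c‖) := by ring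
      _ ≤ k * (M₀ + M) + W + |A| * ‖c‖ := by
          rw [e1]; gcongr
      _ = k * (M₀ + M) + (W + |A| * ‖c‖) := by ring
  have hMle : M ≤ k * (M₀ + M) + (W + |A| * ‖c‖) := supOn_le ht pb
  -- algebra
  have hD : 0 < σ - ‖F‖ * (Real.exp (σ * δ) - 1) := by
    have := (div_lt_one hσ).mp hsg
    linarith
  have hkσ : ‖F‖ * (Real.exp (σ * δ) - 1) = k * σ := by
    rw [hk_def, div_mul_cancel₀ _ hσ.ne']
  have h1k : 0 < 1 - k := by linarith
  have hM2 : (1 - k) * M ≤ W + |A| * ‖c‖ + M₀ := by nlinarith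
  have hfinal : M ≤ (W + |A| * ‖c‖ + M₀) / (1 - k) :=
    (le_div_iff₀ h1k).mpr (by nlinarith)
  refine le_trans hfinal (le_of_eq ?_)
  rw [hkσ]
  have hne : σ - k * σ ≠ 0 := by rw [hkσ] at hD; linarith
  field_simp
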